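/- Assume C is Krull–Schmidt (every object is a finite direct sum of objects whose endomorphism rings are local). If A, A₁, A₂ are objects of C such that the image of A in the quotient category C/X is isomorphic to the direct sum of the images of A₁ and A₂, then there exist objects X₁, X₂ in X such that A ⊕ X₁ ≅ A₁ ⊕ A₂ ⊕ X₂ in C. -/

import Mathlib

/-!
Common definitions: the ideal of morphisms factoring through a subcategory `X`
(given as a set of objects of `C`), `X`-monic and `X`-epic morphisms, left and
right `X`-approximations, additive subcategories closed under isomorphisms,
direct sums and direct summands, and the additive quotient category `C/X`
(realized via `CategoryTheory.Quotient` of the relation `xRel X`).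
-/

open CategoryTheory Category Limits Pretriangulated

universe v u

namespace PaperStmt

variable {C : Type u} [Category.{v} C]

/-- `f` factors through an object of `X`. -/
def FactorsThru (X : Set C) {A B : C} (f : A ⟶ B) : Prop :=
  ∃ (M : C) (g : A ⟶ M) (h : M ⟶ B), M ∈ X ∧ g ≫ h = f

/-- `f : A ⟶ B` is `X`-monic: the map `Hom(B, X') → Hom(A, X')`, `g ↦ g ∘ f`,
is surjective for every object `X'` of `X`. -/
def IsXMonic (X : Set C) {A B : C} (f : A ⟶ B) : Prop :=
  ∀ ⦃X' : C⦄, X' ∈ X → ∀ g : A ⟶ X', ∃ h : B ⟶ X', f ≫ h = g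

/-- `f : A ⟶ B` is `X`-epic: the map `Hom(X', A) → Hom(X', B)`, `g ↦ f ∘ g`,
is surjective for every object `X'` of `X`. -/
def IsXEpic (X : Set C) {A B : C} (f : A ⟶ B) : Prop :=
  ∀ ⦃X' : C⦄, X' ∈ X → ∀ g : X' ⟶ B, ∃ h : X' ⟶ A, h ≫ f = g

/-- `α : A ⟶ X₀` is a left `X`-approximation of `A`: `X₀` lies in `X` and every
morphism from `A` to an object of `X` factors through `α`. -/
def IsLeftApprox (X : Set C) {A X₀ : C} (α : A ⟶ X₀) : Prop :=
  X₀ ∈ X ∧ IsXMonic X α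

/-- `β : X₀ ⟶ B` is a right `X`-approximation of `B`: `X₀` lies in `X` and every
morphism from an object of `X` to `B` factors through `β`. -/
def IsRightApprox (X : Set C) {X₀ B : C} (β : X₀ ⟶ B) : Prop :=
  X₀ ∈ X ∧ IsXEpic X β

/-- `X` is (the object class of) a full additive subcategory of `C`, closed
under isomorphisms, finite direct sums and direct summands. -/
structure IsAdditiveClosedSubcat [Preadditive C] [HasBinaryBiproducts C] (X : Set C) :
    Prop where
  zero_mem : ∀ Z : C, IsZero Z → Z ∈ X
  iso_closed : ∀ {A B : C}, (A ≅ B) → A ∈ X → B ∈ X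
  sum_closed : ∀ {A B : C}, A ∈ X → B ∈ X → (A ⊞ B) ∈ X
  summand_closed : ∀ {A B : C}, (A ⊞ B) ∈ X → A ∈ X

/-- Two morphisms are identified in the quotient category `C/X` precisely when
their difference factors through an object of `X`. -/
def xRel [Preadditive C] (X : Set C) : HomRel C :=
  fun _ _ f g => FactorsThru X (f - g)

section Aux

variable [Preadditive C] [HasBinaryBiproducts C]

open Limits Preadditive

/-- An idempotent `e` splits: `e = p ≫ i` with `i ≫ p = 𝟙`. -/
def IsSplit {Y : C} (e : Y ⟶ Y) : Prop :=
  ∃ (K : C) (p : Y ⟶ K) (i : K ⟶ Y), i ≫ p = 𝟙 K ∧ p ≫ i = e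

lemma isSplit_of_iso {Y Z : C} (φ : Y ≅ Z)
    (hZ : ∀ g : Z ⟶ Z, g ≫ g = g → IsSplit g) (e : Y ⟶ Y) (hee : e ≫ e = e) :
    IsSplit e := by
  obtain ⟨K, p, i, hip, hpi⟩ := hZ (φ.inv ≫ e ≫ φ.hom)
    (by rw [Category.assoc, Category.assoc, Iso.hom_inv_id_assoc, ← Category.assoc e e, hee])
  refine ⟨K, φ.hom ≫ p, i ≫ φ.inv, by simpa using hip, ?_⟩
  calc (φ.hom ≫ p) ≫ i ≫ φ.inv = φ.hom ≫ (p ≫ i) ≫ φ.inv := by simp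
  _ = φ.hom ≫ (φ.inv ≫ e ≫ φ.hom) ≫ φ.inv := by rw [hpi]
  _ = e := by simp

/-- Decomposition of an endomorphism of a binary biproduct into its four components. -/
lemma biprod_decomp {A₁ B : C} (e : A₁ ⊞ B ⟶ A₁ ⊞ B) :
    e = biprod.fst ≫ (biprod.inl ≫ e ≫ biprod.fst) ≫ biprod.inl
      + biprod.fst ≫ (biprod.inl ≫ e ≫ biprod.snd) ≫ biprod.inr
      + biprod.snd ≫ (biprod.inr ≫ e ≫ biprod.fst) ≫ biprod.inl
      + biprod.snd ≫ (biprod.inr ≫ e ≫ biprod.snd) ≫ biprod.inr := by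
  apply biprod.hom_ext' <;> apply biprod.hom_ext <;> simp

/-- Conjugating an idempotent on `A₁ ⊞ B` whose `(1,1)`-entry `a` has `𝟙 - a`
invertible, into a "corner" form. -/
lemma conj_diag {A₁ B : C} (a : A₁ ⟶ A₁) (b : A₁ ⟶ B) (c : B ⟶ A₁) (d : B ⟶ B) (w : A₁ ⟶ A₁)
    (h1 : a ≫ a + b ≫ c = a) (h2 : a ≫ b + b ≫ d = b)
    (h3 : c ≫ a + d ≫ c = c) (h4 : c ≫ b + d ≫ d = d)
    (hw1 : (𝟙 A₁ - a) ≫ w = 𝟙 A₁) (hw2 : w ≫ (𝟙 A₁ - a) = 𝟙 A₁) :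
    ∃ (V W : A₁ ⊞ B ⟶ A₁ ⊞ B) (g : B ⟶ B), V ≫ W = 𝟙 _ ∧ W ≫ V = 𝟙 _ ∧ g ≫ g = g ∧
      biprod.fst ≫ a ≫ biprod.inl + biprod.fst ≫ b ≫ biprod.inr
        + biprod.snd ≫ c ≫ biprod.inl + biprod.snd ≫ d ≫ biprod.inr
      = W ≫ biprod.snd ≫ g ≫ biprod.inr ≫ V := by
  have hbc : b ≫ c = a - a ≫ a := eq_sub_of_add_eq' h1
  have hbd : b ≫ d = b - a ≫ b := eq_sub_of_add_eq' h2
  have hdc : d ≫ c = c - c ≫ a := eq_sub_of_add_eq' h3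
  have hdd : d ≫ d = d - c ≫ b := eq_sub_of_add_eq' h4
  have hwa : w ≫ a = w - 𝟙 A₁ := by
    have h := hw2; rw [comp_sub, comp_id] at h
    exact eq_sub_of_add_eq' (sub_eq_iff_eq_add.mp h).symm
  have haw : a ≫ w = w - 𝟙 A₁ := by
    have h := hw1; rw [sub_comp, id_comp] at h
    exact eq_sub_of_add_eq' (sub_eq_iff_eq_add.mp h).symm
  have key1 : (a - a ≫ a) ≫ w = a := by
    simp only [sub_comp, comp_sub, comp_id, id_comp, Category.assoc, haw]
    abel
  have key2 : w ≫ (a - a ≫ a) = a := by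
    simp only [comp_sub, ← Category.assoc, hwa, sub_comp, id_comp]
    abel
  have key3 : w ≫ (b - a ≫ b) = b := by
    simp only [comp_sub, ← Category.assoc, hwa, sub_comp, id_comp]
    abel
  set g : B ⟶ B := d + c ≫ w ≫ b with hg
  have L1 : b ≫ g = b := by
    rw [hg, comp_add, hbd]
    rw [show b ≫ c ≫ w ≫ b = ((b ≫ c) ≫ w) ≫ b by simp only [Category.assoc]]
    rw [hbc, key1]; abel
  have L2 : g ≫ c = c := by
    rw [hg, add_comp, hdc, Category.assoc, Category.assoc, hbc, key2]; abel
  have L3 : g ≫ d = d := by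
    rw [hg, add_comp, hdd, Category.assoc, Category.assoc, hbd, key3]; abel
  have hgg : g ≫ g = g := by
    conv_lhs => rw [hg, comp_add]
    rw [L3, show g ≫ c ≫ w ≫ b = (g ≫ c) ≫ w ≫ b by rw [Category.assoc], L2, hg]
  have hbcw : b ≫ c ≫ w = a := by
    rw [← Category.assoc, hbc, key1]
  refine ⟨(𝟙 _ - biprod.fst ≫ b ≫ biprod.inr) ≫ (𝟙 _ + biprod.snd ≫ (c ≫ w) ≫ biprod.inl),
    (𝟙 _ - biprod.snd ≫ (c ≫ w) ≫ biprod.inl) ≫ (𝟙 _ + biprod.fst ≫ b ≫ biprod.inr),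
    g, ?_, ?_, hgg, ?_⟩
  · simp only [comp_add, add_comp, comp_sub, sub_comp, id_comp, comp_id, Category.assoc,
      biprod.inl_fst_assoc, biprod.inl_snd_assoc, biprod.inr_fst_assoc, biprod.inr_snd_assoc,
      biprod.inl_fst, biprod.inl_snd, biprod.inr_fst, biprod.inr_snd,
      zero_comp, comp_zero, biprod.inl_snd_assoc]
    abel
  · simp only [comp_add, add_comp, comp_sub, sub_comp, id_comp, comp_id, Category.assoc,
      biprod.inl_fst_assoc, biprod.inl_snd_assoc, biprod.inr_fst_assoc, biprod.inr_snd_assoc,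
      zero_comp, comp_zero]
    abel
  · have e1 : g ≫ c ≫ w = c ≫ w := by rw [← Category.assoc, L2]
    have e0 : b ≫ g ≫ c ≫ w = a := by rw [← Category.assoc, L1, hbcw]
    have e2 : c ≫ w ≫ b ≫ g ≫ c ≫ w = c ≫ w - c := by
      rw [e0, hwa, comp_sub, comp_id]
    have e3 : c ≫ w ≫ b ≫ g = c ≫ w ≫ b := by rw [L1]
    apply biprod.hom_ext' <;> apply biprod.hom_ext <;>
      simp only [comp_add, add_comp, comp_sub, sub_comp, id_comp, comp_id, Category.assoc,
        neg_comp, comp_neg, neg_neg,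
        biprod.inl_fst_assoc, biprod.inl_snd_assoc, biprod.inr_fst_assoc, biprod.inr_snd_assoc,
        biprod.inl_fst, biprod.inl_snd, biprod.inr_fst, biprod.inr_snd,
        zero_comp, comp_zero, add_zero, zero_add, sub_zero, zero_sub, neg_zero]
    · rw [e0]
    · exact L1.symm
    · rw [e2, e1]; abel
    · rw [e3, hg]; abel

/-- Expansion of a composite through a binary biproduct. -/
lemma middle_expand {P Q A₁ B : C} (x : P ⟶ A₁ ⊞ B) (y : A₁ ⊞ B ⟶ Q) :
    x ≫ y = (x ≫ biprod.fst) ≫ (biprod.inl ≫ y) + (x ≫ biprod.snd) ≫ (biprod.inr ≫ y) := by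
  calc x ≫ y = x ≫ 𝟙 _ ≫ y := by rw [id_comp]
  _ = x ≫ (biprod.fst ≫ biprod.inl + biprod.snd ≫ biprod.inr) ≫ y := by rw [biprod.total]
  _ = _ := by simp only [comp_add, add_comp, Category.assoc]

lemma bin_split {A₁ B : C} (hloc : IsLocalRing (End A₁))
    (hB : ∀ g : B ⟶ B, g ≫ g = g → IsSplit g)
    (e : A₁ ⊞ B ⟶ A₁ ⊞ B) (hee : e ≫ e = e) : IsSplit e := by
  have main : ∀ e' : A₁ ⊞ B ⟶ A₁ ⊞ B, e' ≫ e' = e' →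
      IsUnit (M := End A₁) (𝟙 A₁ - biprod.inl ≫ e' ≫ biprod.fst) →
      ∃ (V W : A₁ ⊞ B ⟶ A₁ ⊞ B) (g : B ⟶ B), V ≫ W = 𝟙 _ ∧ W ≫ V = 𝟙 _ ∧ g ≫ g = g ∧
        e' = W ≫ biprod.snd ≫ g ≫ biprod.inr ≫ V := by
    intro e' he hu
    have hq : ∀ {P Q : C} (x : P ⟶ A₁ ⊞ B) (y : A₁ ⊞ B ⟶ Q),
        (x ≫ e' ≫ biprod.fst) ≫ (biprod.inl ≫ e' ≫ y)
          + (x ≫ e' ≫ biprod.snd) ≫ (biprod.inr ≫ e' ≫ y) = x ≫ e' ≫ y := by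
      intro P Q x y
      have hh := middle_expand (x ≫ e') (e' ≫ y)
      simp only [Category.assoc] at hh
      simp only [Category.assoc]
      rw [← hh, show x ≫ e' ≫ e' ≫ y = x ≫ (e' ≫ e') ≫ y by simp only [Category.assoc], he]
    obtain ⟨u, hu'⟩ := hu
    have hw1 : (𝟙 A₁ - biprod.inl ≫ e' ≫ biprod.fst) ≫ (↑u⁻¹ : End A₁) = 𝟙 A₁ := by
      have h2 := u.inv_mul
      rw [End.mul_def, hu'] at h2
      exact h2
    have hw2 : (↑u⁻¹ : End A₁) ≫ (𝟙 A₁ - biprod.inl ≫ e' ≫ biprod.fst) = 𝟙 A₁ := by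
      have h2 := u.mul_inv
      rw [End.mul_def, hu'] at h2
      exact h2
    have h1 := hq biprod.inl biprod.fst
    have h2 := hq biprod.inl biprod.snd
    have h3 := hq biprod.inr biprod.fst
    have h4 := hq biprod.inr biprod.snd
    obtain ⟨V, W, g, hVW, hWV, hgg, heq⟩ :=
      conj_diag (biprod.inl ≫ e' ≫ biprod.fst) (biprod.inl ≫ e' ≫ biprod.snd)
        (biprod.inr ≫ e' ≫ biprod.fst) (biprod.inr ≫ e' ≫ biprod.snd)
        (↑u⁻¹ : End A₁) h1 h2 h3 h4 hw1 hw2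
    exact ⟨V, W, g, hVW, hWV, hgg, by rw [biprod_decomp e', ← heq]⟩
  have map_decomp : ∀ g' : B ⟶ B, biprod.map (𝟙 A₁) g'
      = 𝟙 (A₁ ⊞ B) - biprod.snd ≫ (𝟙 B - g') ≫ biprod.inr := by
    intro g'
    apply biprod.hom_ext' <;> apply biprod.hom_ext <;>
      simp [comp_sub, sub_comp]
  rcases hloc.isUnit_or_isUnit_of_add_one
      (a := (biprod.inl ≫ e ≫ biprod.fst : End A₁))
      (b := (𝟙 A₁ - biprod.inl ≫ e ≫ biprod.fst : End A₁)) (by abel) with hu | hu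
  · -- `a` is a unit; work with `𝟙 - e`
    have hee2 : (𝟙 (A₁ ⊞ B) - e) ≫ (𝟙 (A₁ ⊞ B) - e) = 𝟙 (A₁ ⊞ B) - e := by
      simp only [sub_comp, comp_sub, id_comp, comp_id, hee]; abel
    have hentry : (biprod.inl ≫ (𝟙 (A₁ ⊞ B) - e) ≫ biprod.fst : End A₁)
        = (𝟙 A₁ - biprod.inl ≫ e ≫ biprod.fst : End A₁) := by
      simp [comp_sub, sub_comp]
    obtain ⟨V, W, g, hVW, hWV, hgg, heq⟩ := main _ hee2 (by rw [hentry, sub_sub_cancel]; try exact hu)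
    have hgg2 : (𝟙 B - g) ≫ (𝟙 B - g) = 𝟙 B - g := by
      simp only [sub_comp, comp_sub, id_comp, comp_id, hgg]; abel
    obtain ⟨K, p, i, hip, hpi⟩ := hB (𝟙 B - g) hgg2
    have hmap : biprod.map (𝟙 A₁) p ≫ biprod.map (𝟙 A₁) i = biprod.map (𝟙 A₁) (p ≫ i) := by
      apply biprod.hom_ext' <;> apply biprod.hom_ext <;> simp
    have hmap2 : biprod.map (𝟙 A₁) i ≫ biprod.map (𝟙 A₁) p = biprod.map (𝟙 A₁) (i ≫ p) := by
      apply biprod.hom_ext' <;> apply biprod.hom_ext <;> simp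
    refine ⟨A₁ ⊞ K, W ≫ biprod.map (𝟙 A₁) p, biprod.map (𝟙 A₁) i ≫ V, ?_, ?_⟩
    · rw [Category.assoc, ← Category.assoc V W, hVW, id_comp, hmap2, hip]
      apply biprod.hom_ext' <;> apply biprod.hom_ext <;> simp
    · rw [Category.assoc, ← Category.assoc _ _ V, hmap, hpi, map_decomp, sub_sub_cancel]
      have : e = 𝟙 (A₁ ⊞ B) - (W ≫ biprod.snd ≫ g ≫ biprod.inr ≫ V) := by
        rw [← heq]; abel
      rw [this, sub_comp, id_comp, comp_sub, hWV]
      simp only [Category.assoc]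
  · obtain ⟨V, W, g, hVW, hWV, hgg, heq⟩ := main e hee hu
    obtain ⟨K, p, i, hip, hpi⟩ := hB g hgg
    refine ⟨K, W ≫ biprod.snd ≫ p, i ≫ biprod.inr ≫ V, ?_, ?_⟩
    · rw [show (i ≫ biprod.inr ≫ V) ≫ W ≫ biprod.snd ≫ p
          = i ≫ biprod.inr ≫ (V ≫ W) ≫ biprod.snd ≫ p by simp only [Category.assoc], hVW]
      simp [hip]
    · rw [heq]
      simp only [Category.assoc]
      rw [show biprod.snd ≫ p ≫ i ≫ biprod.inr ≫ V = biprod.snd ≫ (p ≫ i) ≫ biprod.inr ≫ V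
        by simp only [Category.assoc], hpi]

/-- `⨁ f` over `Fin (n+1)` decomposes as `f 0 ⊞ ⨁ (f ∘ Fin.succ)`. -/
noncomputable def finSuccIso [HasFiniteBiproducts C] {n : ℕ} (f : Fin (n + 1) → C) :
    (⨁ f) ≅ f 0 ⊞ (⨁ fun j : Fin n => f j.succ) where
  hom := biprod.lift (biproduct.π f 0) (biproduct.lift fun j => biproduct.π f j.succ)
  inv := biprod.desc (biproduct.ι f 0) (biproduct.desc fun j => biproduct.ι f j.succ)
  hom_inv_id := by
    rw [biprod.lift_desc, biproduct.lift_desc, ← biproduct.total, Fin.sum_univ_succ]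
  inv_hom_id := by
    apply biprod.hom_ext'
    · apply biprod.hom_ext
      · simp
      · apply biproduct.hom_ext
        intro j
        simp [biproduct.ι_π, (Fin.succ_ne_zero j).symm]
    · apply biproduct.hom_ext'
      intro j
      apply biprod.hom_ext
      · simp [biproduct.ι_π, Fin.succ_ne_zero j]
      · apply biproduct.hom_ext
        intro k
        simp [biproduct.ι_π, Fin.succ_inj]

lemma split_biproduct [HasFiniteBiproducts C] :
    ∀ (n : ℕ) (f : Fin n → C), (∀ i, IsLocalRing (End (f i))) →
      ∀ g : (⨁ f) ⟶ (⨁ f), g ≫ g = g → IsSplit g := by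
  intro n
  induction n with
  | zero =>
    intro f _ g _
    refine ⟨⨁ f, 𝟙 _, 𝟙 _, by simp, ?_⟩
    apply biproduct.hom_ext
    intro j
    exact j.elim0
  | succ n ih =>
    intro f hloc g hgg
    exact isSplit_of_iso (finSuccIso f)
      (fun g' hg' => bin_split (hloc 0) (ih _ (fun i => hloc i.succ)) g' hg') g hgg

lemma split_all [HasFiniteBiproducts C]
    (hKS : ∀ A : C, ∃ (n : ℕ) (f : Fin n → C),
      (∀ i, IsLocalRing (End (f i))) ∧ Nonempty (A ≅ ⨁ f))
    {Y : C} (e : Y ⟶ Y) (hee : e ≫ e = e) : IsSplit e := by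
  obtain ⟨n, f, hloc, ⟨φ⟩⟩ := hKS Y
  exact isSplit_of_iso φ (split_biproduct n f hloc) e hee

/-- Complement of a retract, given splitting of the complementary idempotent. -/
lemma retract_data {B Y : C} (iB : B ⟶ Y) (rB : Y ⟶ B) (hir : iB ≫ rB = 𝟙 B)
    (hsplit : IsSplit (𝟙 Y - rB ≫ iB)) :
    ∃ (B' : C) (p : Y ⟶ B') (i : B' ⟶ Y), i ≫ p = 𝟙 B' ∧ i ≫ rB = 0 ∧
      Nonempty (Y ≅ B ⊞ B') := by
  obtain ⟨B', p, i, hip, hpi⟩ := hsplit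
  have hirB : i ≫ rB = 0 := by
    have h1 : i ≫ rB ≫ iB = 0 := by
      have h2 : i ≫ p ≫ i = i := by rw [← Category.assoc, hip, id_comp]
      rw [hpi, comp_sub, comp_id] at h2
      exact sub_eq_self.mp h2
    have h2 := congrArg (fun t => t ≫ rB) h1
    simp only [Category.assoc, zero_comp] at h2
    rwa [hir, comp_id] at h2
  have hiBp : iB ≫ p = 0 := by
    have h1 : iB ≫ p ≫ i = 0 := by
      rw [hpi, comp_sub, comp_id, ← Category.assoc, hir, id_comp, sub_self]
    have h2 := congrArg (fun t => t ≫ p) h1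
    simp only [Category.assoc, zero_comp] at h2
    rwa [hip, comp_id] at h2
  refine ⟨B', p, i, hip, hirB, ⟨⟨biprod.lift rB p, biprod.desc iB i, ?_, ?_⟩⟩⟩
  · rw [biprod.lift_desc, hpi]; abel
  · apply biprod.hom_ext' <;> apply biprod.hom_ext <;>
      simp [hir, hiBp, hirB, hip]

lemma compl_idem {B Y : C} (iB : B ⟶ Y) (rB : Y ⟶ B) (hir : iB ≫ rB = 𝟙 B) :
    (𝟙 Y - rB ≫ iB) ≫ (𝟙 Y - rB ≫ iB) = 𝟙 Y - rB ≫ iB := by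
  simp only [sub_comp, comp_sub, id_comp, comp_id]
  rw [show (rB ≫ iB) ≫ rB ≫ iB = rB ≫ (iB ≫ rB) ≫ iB from by simp only [Category.assoc],
    hir, id_comp]
  abel

lemma mem_of_retract {X : Set C} (hX : IsAdditiveClosedSubcat X)
    {B' M : C} (hM : M ∈ X) (ρ : B' ⟶ M) (σ : M ⟶ B') (hρσ : ρ ≫ σ = 𝟙 B')
    (hsplit : IsSplit (𝟙 M - σ ≫ ρ)) : B' ∈ X := by
  obtain ⟨B'', p, i, _, _, ⟨ψ⟩⟩ := retract_data ρ σ hρσ hsplit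
  exact hX.summand_closed (hX.iso_closed ψ hM)

end Aux

open Preadditive ZeroObject

/-- in a Krull–Schmidt additive category `C`, if the image of `A`
in the quotient category `C/X` is isomorphic to the direct sum of the images of
`A₁` and `A₂`, then `A ⊕ X₁ ≅ A₁ ⊕ A₂ ⊕ X₂` in `C` for some `X₁, X₂ ∈ X`. -/
theorem statement16 [Preadditive C] [HasBinaryBiproducts C] [HasFiniteBiproducts C]
    (X : Set C) (hX : IsAdditiveClosedSubcat X)
    -- `C` is Krull–Schmidt
    (hKS : ∀ A : C, ∃ (n : ℕ) (f : Fin n → C),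
      (∀ i, IsLocalRing (End (f i))) ∧ Nonempty (A ≅ ⨁ f))
    (A A₁ A₂ : C)
    (h : Nonempty ((Quotient.functor (xRel X)).obj A ≅
      (Quotient.functor (xRel X)).obj (A₁ ⊞ A₂))) :
    ∃ X₁ ∈ X, ∃ X₂ ∈ X, Nonempty ((A ⊞ X₁) ≅ (A₁ ⊞ A₂ ⊞ X₂)) := by
  have h0X : (0 : C) ∈ X := hX.zero_mem 0 (Limits.isZero_zero C)
  have hzero : ∀ {P Q : C}, FactorsThru X (0 : P ⟶ Q) := fun {P Q} => ⟨0, 0, 0, h0X, by simp⟩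
  haveI : Congruence (xRel X) := by
    refine @Congruence.mk _ _ _ ⟨?_⟩ ⟨?_⟩ ?_
    rotate_right 1
    · intro P Q
      refine ⟨fun f => ?_, fun {f g} hfg => ?_, fun {f g k} h1 h2 => ?_⟩
      · show FactorsThru X (f - f); rw [sub_self]; exact hzero
      · obtain ⟨M, α, β, hM, hc⟩ := hfg
        exact ⟨M, -α, β, hM, by rw [neg_comp, hc]; abel⟩
      · obtain ⟨M, α, β, hM, hc⟩ := h1
        obtain ⟨N, γ, δ, hN, hd⟩ := h2
        exact ⟨M ⊞ N, biprod.lift α γ, biprod.desc β δ, hX.sum_closed hM hN,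
          by rw [biprod.lift_desc, hc, hd]; abel⟩
    · intro P Q R f g g' hgg'
      obtain ⟨M, α, β, hM, hc⟩ := hgg'
      exact ⟨M, f ≫ α, β, hM, by rw [Category.assoc, hc, comp_sub]⟩
    · intro P Q R f f' g hff'
      obtain ⟨M, α, β, hM, hc⟩ := hff'
      exact ⟨M, α, β ≫ g, hM, by rw [← Category.assoc, hc, sub_comp]⟩
  obtain ⟨I⟩ := h
  obtain ⟨f, hf⟩ := (Quotient.functor (xRel X)).map_surjective I.hom
  obtain ⟨g, hg⟩ := (Quotient.functor (xRel X)).map_surjective I.inv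
  have hfg : FactorsThru X (f ≫ g - 𝟙 A) := by
    have heq : (Quotient.functor (xRel X)).map (f ≫ g)
        = (Quotient.functor (xRel X)).map (𝟙 A) := by
      rw [Functor.map_comp, hf, hg, I.hom_inv_id, CategoryTheory.Functor.map_id]
    exact (Quotient.functor_map_eq_iff (xRel X) _ _).mp heq
  have hgf : FactorsThru X (g ≫ f - 𝟙 (A₁ ⊞ A₂)) := by
    have heq : (Quotient.functor (xRel X)).map (g ≫ f)
        = (Quotient.functor (xRel X)).map (𝟙 (A₁ ⊞ A₂)) := by
      rw [Functor.map_comp, hf, hg, I.inv_hom_id, CategoryTheory.Functor.map_id]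
    exact (Quotient.functor_map_eq_iff (xRel X) _ _).mp heq
  obtain ⟨N, p0, q0, hN, hpq⟩ := hgf
  obtain ⟨M, u0, v0, hM, huv⟩ := hfg
  have hiBrB : (biprod.lift g (-p0)) ≫ (biprod.desc f q0) = 𝟙 (A₁ ⊞ A₂) := by
    rw [biprod.lift_desc, neg_comp, hpq]; abel
  obtain ⟨B', p, i, hip, hirB, ⟨Φ⟩⟩ := retract_data _ _ hiBrB
    (split_all hKS _ (compl_idem _ _ hiBrB))
  set a' : B' ⟶ A := i ≫ biprod.fst with ha'
  set n' : B' ⟶ N := i ≫ biprod.snd with hn'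
  have hsum : a' ≫ f + n' ≫ q0 = 0 := by
    have hexp := middle_expand i (biprod.desc f q0)
    rw [hirB] at hexp
    simpa [ha', hn', Category.assoc] using hexp.symm
  have haf : a' ≫ f = -(n' ≫ q0) := eq_neg_of_add_eq_zero_left hsum
  have hIA : f ≫ g - u0 ≫ v0 = 𝟙 A := by rw [huv]; abel
  have hone : 𝟙 B' = a' ≫ (biprod.inl ≫ p) + n' ≫ (biprod.inr ≫ p) := by
    rw [← hip, middle_expand i p]
  have key : a' ≫ biprod.inl ≫ p
      = -(n' ≫ q0 ≫ g ≫ biprod.inl ≫ p) - a' ≫ u0 ≫ v0 ≫ biprod.inl ≫ p := by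
    have e1 : a' ≫ biprod.inl ≫ p = (a' ≫ (f ≫ g - u0 ≫ v0)) ≫ (biprod.inl ≫ p) := by
      rw [hIA, comp_id]
    rw [e1, comp_sub, sub_comp]
    rw [show a' ≫ f ≫ g = (a' ≫ f) ≫ g from by simp only [Category.assoc], haf]
    simp only [neg_comp, Category.assoc]
  have hρσ : (biprod.lift n' (a' ≫ u0)) ≫
      (biprod.desc (biprod.inr ≫ p - q0 ≫ g ≫ biprod.inl ≫ p) (-(v0 ≫ biprod.inl ≫ p)))
      = 𝟙 B' := by
    rw [biprod.lift_desc, comp_sub, comp_neg, hone, key]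
    simp only [Category.assoc]
    abel
  have hB'X : B' ∈ X := mem_of_retract hX (hX.sum_closed hN hM) _ _ hρσ
    (split_all hKS _ (compl_idem _ _ hρσ))
  exact ⟨N, hN, B', hB'X, ⟨Φ.trans (biprod.associator A₁ A₂ B')⟩⟩


end PaperStmt
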